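/- Let H be a finite-dimensional complex inner product space, let P_E and P_O be orthogonal projections on H with P_E + P_O = 1, let ψ, φ be unit vectors, and let p ∈ (0,1), q := 1 − p. Set Δ⁰ := p|ψ⟩⟨ψ| − q|φ⟩⟨φ| and M := |ψ⟩⟨ψ| + |φ⟩⟨φ|, and assume [Δ⁰, P_E] = 0. Let Π_ψ be an operator with 0 ≤ Π_ψ ≤ 1 achieving Tr[Π_ψ Δ⁰] = ½(‖Δ⁰‖₁ + Tr Δ⁰), and set Π_φ := 1 − Π_ψ. For ε ∈ ℝ with 0 ≤ p + ε ≤ 1, set Δ^ε := Δ⁰ + ε M (= (p+ε)|ψ⟩⟨ψ| − (q−ε)|φ⟩⟨φ|), Δ^ε_E := P_E Δ^ε P_E, Δ^ε_O := P_O Δ^ε P_O. Then the error excess δP_err := [(p+ε)⟪ψ, Π_φ ψ⟫ + (q−ε)⟪φ, Π_ψ φ⟫] − ½(1 − ‖Δ^ε_E + Δ^ε_O‖₁) satisfies δP_err ≤ k|ε| + g ε, with k := ½‖P_E M P_E + P_O M P_O‖₁ and g := ½ Tr[M(Π_φ − Π_ψ)]. -/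

import Mathlib

open Matrix
open scoped ComplexOrder Kronecker

/-- The trace norm `‖Y‖₁ = Tr √(Yᴴ Y)` of a complex matrix. -/
noncomputable def traceNorm {m : Type*} [Fintype m] [DecidableEq m]
    (Y : Matrix m m ℂ) : ℝ :=
  (((Matrix.posSemidef_conjTranspose_mul_self Y).1.eigenvectorUnitary : Matrix m m ℂ) *
      diagonal (((↑) : ℝ → ℂ) ∘ (√·) ∘ (Matrix.posSemidef_conjTranspose_mul_self Y).1.eigenvalues) *
      (star (Matrix.posSemidef_conjTranspose_mul_self Y).1.eigenvectorUnitary : Matrix m m ℂ)).trace.re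

/-- The inner product `⟪x, y⟫ = ∑ i, conj (x i) * y i` on `m → ℂ`. -/
noncomputable def cinner {m : Type*} [Fintype m] (x y : m → ℂ) : ℂ := star x ⬝ᵥ y

/-- An orthogonal projection: a self-adjoint idempotent matrix. -/
def IsOrthoProj {m : Type*} [Fintype m] (P : Matrix m m ℂ) : Prop :=
  P.IsHermitian ∧ P * P = P

/-- An effect: an operator `S` with `0 ≤ S ≤ 1`. -/
def IsEffect {m : Type*} [Fintype m] [DecidableEq m] (S : Matrix m m ℂ) : Prop :=
  S.PosSemidef ∧ (1 - S).PosSemidef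

/-- The rank-one operator `|ψ⟩⟨ψ|`. -/
noncomputable def outer {m : Type*} (ψ : m → ℂ) : Matrix m m ℂ :=
  Matrix.vecMulVec ψ (star ψ)


set_option linter.unusedSectionVars false

variable {d : Type*} [Fintype d] [DecidableEq d]

lemma conj_diag_mul_conj_diag (U : Matrix d d ℂ) (hU : star U * U = 1) (f g : d → ℝ) :
    (U * diagonal (Complex.ofReal ∘ f) * star U) * (U * diagonal (Complex.ofReal ∘ g) * star U)
      = U * diagonal (Complex.ofReal ∘ fun i => f i * g i) * star U := by
  have h : diagonal (Complex.ofReal ∘ f) * diagonal (Complex.ofReal ∘ g)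
      = diagonal (Complex.ofReal ∘ fun i => f i * g i) := by
    have h2 : (Complex.ofReal ∘ fun i => f i * g i) = fun i => (f i : ℂ) * g i := by
      funext i; simp
    rw [diagonal_mul_diagonal, h2]
    rfl
  calc (U * diagonal (Complex.ofReal ∘ f) * star U) * (U * diagonal (Complex.ofReal ∘ g) * star U)
      = U * (diagonal (Complex.ofReal ∘ f) * ((star U * U) * (diagonal (Complex.ofReal ∘ g) * star U))) := by
        simp only [Matrix.mul_assoc]
    _ = U * diagonal (Complex.ofReal ∘ fun i => f i * g i) * star U := by
        rw [hU, Matrix.one_mul, ← Matrix.mul_assoc (diagonal _), h, Matrix.mul_assoc]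

lemma trace_conj_diag (U : Matrix d d ℂ) (hU : star U * U = 1) (f : d → ℝ) :
    (U * diagonal (Complex.ofReal ∘ f) * star U).trace = ∑ i, (f i : ℂ) := by
  rw [trace_mul_cycle, hU, Matrix.one_mul, trace_diagonal]
  rfl

lemma psd_conj_diag (U : Matrix d d ℂ) (f : d → ℝ) (hf : ∀ i, 0 ≤ f i) :
    (U * diagonal (Complex.ofReal ∘ f) * star U).PosSemidef := by
  have h : (diagonal (Complex.ofReal ∘ f)).PosSemidef := by
    refine PosSemidef.diagonal fun i => ?_
    simpa using Complex.zero_le_real.mpr (hf i)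
  simpa [Matrix.star_eq_conjTranspose] using h.mul_mul_conjTranspose_same U

lemma exists_traceNorm_sqrt (A : Matrix d d ℂ) :
    ∃ S : Matrix d d ℂ, S.PosSemidef ∧ S ^ 2 = Aᴴ * A ∧ traceNorm A = S.trace.re := by
  set H := (posSemidef_conjTranspose_mul_self A).1
  set U : Matrix d d ℂ := (H.eigenvectorUnitary : Matrix d d ℂ) with hUdef
  have hUU' : star U * U = 1 := mem_unitaryGroup_iff'.mp H.eigenvectorUnitary.2
  refine ⟨U * diagonal (Complex.ofReal ∘ fun i => √(H.eigenvalues i)) * star U,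
    psd_conj_diag U _ fun i => Real.sqrt_nonneg _, ?_, rfl⟩
  rw [pow_two, conj_diag_mul_conj_diag U hUU']
  have : (fun i => √(H.eigenvalues i) * √(H.eigenvalues i)) = H.eigenvalues :=
    funext fun i => Real.mul_self_sqrt ((posSemidef_conjTranspose_mul_self A).eigenvalues_nonneg i)
  rw [this]
  exact H.spectral_theorem.symm

open scoped MatrixOrder in
lemma traceNorm_eq_of_sq {A B : Matrix d d ℂ} (hB : B.PosSemidef) (hB2 : B ^ 2 = Aᴴ * A) :
    traceNorm A = B.trace.re := by
  obtain ⟨X, hX, hX2, hXt⟩ := exists_traceNorm_sqrt A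
  have hXB : X = B :=
    (CFC.sqrt_unique (a := Aᴴ * A) (by rw [← sq, hX2]) hX.nonneg).symm.trans
      (CFC.sqrt_unique (a := Aᴴ * A) (by rw [← sq, hB2]) hB.nonneg)
  rw [hXt, hXB]

lemma traceNorm_herm (A : Matrix d d ℂ) (hA : A.IsHermitian) :
    traceNorm A = ∑ i, |hA.eigenvalues i| := by
  set U : Matrix d d ℂ := (hA.eigenvectorUnitary : Matrix d d ℂ) with hUdef
  have hUU' : star U * U = 1 := mem_unitaryGroup_iff'.mp hA.eigenvectorUnitary.2
  set B : Matrix d d ℂ := U * diagonal (Complex.ofReal ∘ fun i => |hA.eigenvalues i|) * star U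
    with hBdef
  have hB : B.PosSemidef := psd_conj_diag U _ fun i => abs_nonneg _
  have hB2 : B ^ 2 = Aᴴ * A := by
    rw [hA.eq, pow_two, hBdef, conj_diag_mul_conj_diag U hUU']
    have hsp : A = U * diagonal (Complex.ofReal ∘ hA.eigenvalues) * star U := hA.spectral_theorem
    conv_rhs => rw [hsp, conj_diag_mul_conj_diag U hUU']
    have habs : (fun i => |hA.eigenvalues i| * |hA.eigenvalues i|)
        = fun i => hA.eigenvalues i * hA.eigenvalues i := funext fun i => abs_mul_abs_self _
    rw [habs]
  have hBs := traceNorm_eq_of_sq hB hB2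
  rw [hBs, hBdef, trace_conj_diag U hUU', Complex.re_sum]
  simp

lemma herm_real_smul {A : Matrix d d ℂ} (hA : A.IsHermitian) (c : ℝ) :
    ((c : ℂ) • A).IsHermitian := by
  unfold Matrix.IsHermitian
  rw [conjTranspose_smul, hA.eq, Complex.star_def, Complex.conj_ofReal]

lemma traceNorm_real_smul (c : ℝ) (A : Matrix d d ℂ) :
    traceNorm ((c : ℂ) • A) = |c| * traceNorm A := by
  set cc : ℝ := |c| with hcc
  obtain ⟨S, hSpsd, hS2, -⟩ := exists_traceNorm_sqrt A
  have h1 : ((cc : ℂ) • S).PosSemidef := by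
    refine PosSemidef.of_dotProduct_mulVec_nonneg (herm_real_smul hSpsd.1 _) fun x => ?_
    rw [smul_mulVec, dotProduct_smul, smul_eq_mul]
    exact mul_nonneg (Complex.zero_le_real.mpr (abs_nonneg c)) (hSpsd.dotProduct_mulVec_nonneg x)
  have h2 : ((cc : ℂ) • S) ^ 2 = ((c : ℂ) • A)ᴴ * ((c : ℂ) • A) := by
    rw [smul_pow, conjTranspose_smul, Complex.star_def, Complex.conj_ofReal,
      smul_mul_smul_comm, hS2]
    congr 1
    rw [hcc, ← Complex.ofReal_pow, sq_abs, Complex.ofReal_pow, sq, ← Complex.ofReal_mul]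
  rw [traceNorm_eq_of_sq h1 h2, trace_smul, smul_eq_mul, Complex.re_ofReal_mul,
    traceNorm_eq_of_sq hSpsd hS2]

lemma trace_mul_diagonal' (X : Matrix d d ℂ) (v : d → ℂ) :
    (X * diagonal v).trace = ∑ i, X i i * v i := by
  simp [Matrix.trace, Matrix.diag, Matrix.mul_diagonal]

lemma diag_conj_bound (C : Matrix d d ℂ) (hC1 : (1 - C).PosSemidef) (hC2 : (1 + C).PosSemidef)
    (u : d → ℂ) (hu : star u ⬝ᵥ u = 1) :
    (star u ⬝ᵥ (C *ᵥ u)).im = 0 ∧ |(star u ⬝ᵥ (C *ᵥ u)).re| ≤ 1 := by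
  have e1 : star u ⬝ᵥ ((1 - C) *ᵥ u) = 1 - star u ⬝ᵥ (C *ᵥ u) := by
    rw [sub_mulVec, dotProduct_sub, one_mulVec, hu]
  have e2 : star u ⬝ᵥ ((1 + C) *ᵥ u) = 1 + star u ⬝ᵥ (C *ᵥ u) := by
    rw [add_mulVec, dotProduct_add, one_mulVec, hu]
  have b1 := hC1.dotProduct_mulVec_nonneg u
  have b2 := hC2.dotProduct_mulVec_nonneg u
  rw [e1, Complex.le_def] at b1
  rw [e2, Complex.le_def] at b2
  simp only [Complex.zero_re, Complex.zero_im, Complex.sub_re, Complex.sub_im,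
    Complex.add_re, Complex.add_im, Complex.one_re, Complex.one_im] at b1 b2
  constructor
  · linarith [b1.2, b2.2]
  · rw [abs_le]; constructor <;> linarith [b1.1, b2.1]

lemma re_trace_mul_le_traceNorm (A C : Matrix d d ℂ) (hA : A.IsHermitian)
    (hC1 : (1 - C).PosSemidef) (hC2 : (1 + C).PosSemidef) :
    ((C * A).trace).re ≤ traceNorm A := by
  set U : Matrix d d ℂ := (hA.eigenvectorUnitary : Matrix d d ℂ) with hUdef
  have hUU' : star U * U = 1 := mem_unitaryGroup_iff'.mp hA.eigenvectorUnitary.2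
  have hsp : A = U * diagonal (Complex.ofReal ∘ hA.eigenvalues) * star U := hA.spectral_theorem
  have htr : (C * A).trace = ∑ i, (star U * C * U) i i * (hA.eigenvalues i : ℂ) := by
    conv_lhs => rw [hsp]
    have : C * (U * diagonal (Complex.ofReal ∘ hA.eigenvalues) * star U)
        = (C * U * diagonal (Complex.ofReal ∘ hA.eigenvalues)) * star U := by
      simp only [Matrix.mul_assoc]
    rw [this, trace_mul_comm, ← Matrix.mul_assoc, ← Matrix.mul_assoc, trace_mul_diagonal']
    rfl
  have hXu : ∀ i, (star U * C * U) i i = star (fun k => U k i) ⬝ᵥ (C *ᵥ fun k => U k i) := by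
    intro i
    simp only [mul_apply, mulVec, dotProduct, Pi.star_apply, star_apply,
      Finset.sum_mul, Finset.mul_sum]
    rw [Finset.sum_comm]
    exact Finset.sum_congr rfl fun k _ => Finset.sum_congr rfl fun j _ => by ring
  have hUnit : ∀ i, star (fun k => U k i) ⬝ᵥ (fun k => U k i) = 1 := by
    intro i
    have h := congrArg (fun M : Matrix d d ℂ => M i i) hUU'
    simpa [mul_apply, dotProduct, one_apply] using h
  have hbd : ∀ i, ((star U * C * U) i i).im = 0 ∧ |((star U * C * U) i i).re| ≤ 1 := by
    intro i
    rw [hXu i]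
    exact diag_conj_bound C hC1 hC2 _ (hUnit i)
  rw [htr, Complex.re_sum, traceNorm_herm A hA]
  refine Finset.sum_le_sum fun i _ => ?_
  have : ((star U * C * U) i i * (hA.eigenvalues i : ℂ)).re
      = ((star U * C * U) i i).re * hA.eigenvalues i := by
    simp [Complex.mul_re, Complex.ofReal_re, Complex.ofReal_im]
  rw [this]
  calc ((star U * C * U) i i).re * hA.eigenvalues i
      ≤ |((star U * C * U) i i).re * hA.eigenvalues i| := le_abs_self _
    _ = |((star U * C * U) i i).re| * |hA.eigenvalues i| := abs_mul _ _
    _ ≤ 1 * |hA.eigenvalues i| := by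
        exact mul_le_mul_of_nonneg_right (hbd i).2 (abs_nonneg _)
    _ = |hA.eigenvalues i| := one_mul _

lemma exists_dual_opt (A : Matrix d d ℂ) (hA : A.IsHermitian) :
    ∃ S : Matrix d d ℂ, (1 - S).PosSemidef ∧ (1 + S).PosSemidef ∧
      ((S * A).trace).re = traceNorm A := by
  set U : Matrix d d ℂ := (hA.eigenvectorUnitary : Matrix d d ℂ) with hUdef
  have hUU : U * star U = 1 := mem_unitaryGroup_iff.mp hA.eigenvectorUnitary.2
  have hUU' : star U * U = 1 := mem_unitaryGroup_iff'.mp hA.eigenvectorUnitary.2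
  have hsp : A = U * diagonal (Complex.ofReal ∘ hA.eigenvalues) * star U := hA.spectral_theorem
  set s : d → ℝ := fun i => if hA.eigenvalues i < 0 then -1 else 1 with hsdef
  refine ⟨U * diagonal (Complex.ofReal ∘ s) * star U, ?_, ?_, ?_⟩
  · have : (1 : Matrix d d ℂ) - U * diagonal (Complex.ofReal ∘ s) * star U
        = U * diagonal (Complex.ofReal ∘ fun i => 1 - s i) * star U := by
      have h1 : (1 : Matrix d d ℂ) = U * diagonal (Complex.ofReal ∘ fun _ => (1:ℝ)) * star U := by
        have he : diagonal (Complex.ofReal ∘ fun _ : d => (1:ℝ)) = (1 : Matrix d d ℂ) := by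
          rw [show (Complex.ofReal ∘ fun _ : d => (1:ℝ)) = fun _ => (1:ℂ) from
            funext fun i => by simp, diagonal_one]
        rw [he, Matrix.mul_one, hUU]
      have hd : diagonal (Complex.ofReal ∘ fun _ : d => (1:ℝ)) - diagonal (Complex.ofReal ∘ s)
          = diagonal (Complex.ofReal ∘ fun i => 1 - s i) := by
        rw [diagonal_sub, show (fun i => (Complex.ofReal ∘ fun _ : d => (1:ℝ)) i
          - (Complex.ofReal ∘ s) i) = (Complex.ofReal ∘ fun i => 1 - s i) from
          funext fun i => by simp]
      conv_lhs => rw [h1]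
      rw [← Matrix.sub_mul, ← Matrix.mul_sub, hd]
    rw [this]
    refine psd_conj_diag U _ fun i => ?_
    by_cases h : hA.eigenvalues i < 0 <;> simp [hsdef, h] <;> norm_num
  · have : (1 : Matrix d d ℂ) + U * diagonal (Complex.ofReal ∘ s) * star U
        = U * diagonal (Complex.ofReal ∘ fun i => 1 + s i) * star U := by
      have h1 : (1 : Matrix d d ℂ) = U * diagonal (Complex.ofReal ∘ fun _ => (1:ℝ)) * star U := by
        have he : diagonal (Complex.ofReal ∘ fun _ : d => (1:ℝ)) = (1 : Matrix d d ℂ) := by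
          rw [show (Complex.ofReal ∘ fun _ : d => (1:ℝ)) = fun _ => (1:ℂ) from
            funext fun i => by simp, diagonal_one]
        rw [he, Matrix.mul_one, hUU]
      have hd : diagonal (Complex.ofReal ∘ fun _ : d => (1:ℝ)) + diagonal (Complex.ofReal ∘ s)
          = diagonal (Complex.ofReal ∘ fun i => 1 + s i) := by
        rw [diagonal_add, show (fun i => (Complex.ofReal ∘ fun _ : d => (1:ℝ)) i
          + (Complex.ofReal ∘ s) i) = (Complex.ofReal ∘ fun i => 1 + s i) from
          funext fun i => by simp]
      conv_lhs => rw [h1]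
      rw [← Matrix.add_mul, ← Matrix.mul_add, hd]
    rw [this]
    refine psd_conj_diag U _ fun i => ?_
    by_cases h : hA.eigenvalues i < 0 <;> simp [hsdef, h] <;> norm_num
  · conv_lhs => rw [hsp, conj_diag_mul_conj_diag U hUU']
    rw [trace_conj_diag U hUU', Complex.re_sum, traceNorm_herm A hA]
    refine Finset.sum_congr rfl fun i _ => ?_
    simp only [Complex.ofReal_re]
    by_cases h : hA.eigenvalues i < 0
    · simp [hsdef, h, abs_of_neg h]
    · simp [hsdef, h, abs_of_nonneg (not_lt.mp h)]

lemma traceNorm_add_le_herm (X Y : Matrix d d ℂ) (hX : X.IsHermitian) (hY : Y.IsHermitian) :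
    traceNorm (X + Y) ≤ traceNorm X + traceNorm Y := by
  obtain ⟨S, hS1, hS2, hSeq⟩ := exists_dual_opt (X + Y) (hX.add hY)
  rw [← hSeq, Matrix.mul_add, trace_add, Complex.add_re]
  exact add_le_add (re_trace_mul_le_traceNorm X S hX hS1 hS2)
    (re_trace_mul_le_traceNorm Y S hY hS1 hS2)

lemma outer_herm (v : d → ℂ) : (outer v).IsHermitian := by
  unfold Matrix.IsHermitian outer
  ext i j
  simp [conjTranspose_apply, vecMulVec_apply, mul_comm]

lemma trace_mul_outer (X : Matrix d d ℂ) (v : d → ℂ) :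
    (X * outer v).trace = cinner v (X *ᵥ v) := by
  simp only [outer, cinner, Matrix.trace, Matrix.diag, mul_apply, vecMulVec_apply,
    dotProduct, mulVec, Pi.star_apply, Finset.mul_sum]
  exact Finset.sum_congr rfl fun i _ => Finset.sum_congr rfl fun j _ => by ring

lemma trace_outer (v : d → ℂ) : (outer v).trace = cinner v v := by
  simp [outer, Matrix.trace, Matrix.diag, vecMulVec_apply, cinner, dotProduct, mul_comm]


/-- **Perturbation bound (Eq. (13)).** The excess error of the POVM optimized for the
unperturbed prior, relative to the optimal LOCC error for the perturbed prior, is bounded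
by `k|ε| + gε`. -/
theorem perturbation_error_excess_bound
    {n : ℕ} (P_E P_O : Matrix (Fin n) (Fin n) ℂ)
    (hPE : IsOrthoProj P_E) (hPO : IsOrthoProj P_O) (hsum : P_E + P_O = 1)
    (ψ φ : Fin n → ℂ) (hψ : cinner ψ ψ = 1) (hφ : cinner φ φ = 1)
    (p q : ℝ) (hp : p ∈ Set.Ioo (0 : ℝ) 1) (hq : q = 1 - p)
    (Δ0 M : Matrix (Fin n) (Fin n) ℂ)
    (hΔ0 : Δ0 = (p : ℂ) • outer ψ - (q : ℂ) • outer φ)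
    (hM : M = outer ψ + outer φ)
    (hcomm : Δ0 * P_E = P_E * Δ0)
    (Pψ Pφ : Matrix (Fin n) (Fin n) ℂ) (hPψ : IsEffect Pψ)
    (hopt : ((Pψ * Δ0).trace).re = (traceNorm Δ0 + Δ0.trace.re) / 2)
    (hPφ : Pφ = 1 - Pψ)
    (ε : ℝ) (hε0 : 0 ≤ p + ε) (hε1 : p + ε ≤ 1)
    (Δε : Matrix (Fin n) (Fin n) ℂ) (hΔε : Δε = Δ0 + (ε : ℂ) • M)
    (k g : ℝ)
    (hk : k = traceNorm (P_E * M * P_E + P_O * M * P_O) / 2)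
    (hg : g = ((M * (Pφ - Pψ)).trace).re / 2) :
    ((p + ε) * (cinner ψ (Pφ.mulVec ψ)).re + (q - ε) * (cinner φ (Pψ.mulVec φ)).re) -
        (1 - traceNorm (P_E * Δε * P_E + P_O * Δε * P_O)) / 2 ≤
      k * |ε| + g * ε := by
  have hψ' : star ψ ⬝ᵥ ψ = 1 := hψ
  have hφ' : star φ ⬝ᵥ φ = 1 := hφ
  set a : ℝ := (cinner ψ (Pψ.mulVec ψ)).re with ha
  set b : ℝ := (cinner φ (Pψ.mulVec φ)).re with hb
  set T0 : ℝ := traceNorm Δ0 with hT0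
  set MP : Matrix (Fin n) (Fin n) ℂ := P_E * M * P_E + P_O * M * P_O with hMPdef
  -- (f1)
  have f1 : (cinner ψ (Pφ.mulVec ψ)).re = 1 - a := by
    rw [hPφ, ha]
    unfold cinner
    rw [Matrix.sub_mulVec, Matrix.one_mulVec, dotProduct_sub, hψ']
    simp [Complex.sub_re]
  -- (f2)
  have htr0 : (Pψ * Δ0).trace = (p : ℂ) * cinner ψ (Pψ.mulVec ψ)
      - (q : ℂ) * cinner φ (Pψ.mulVec φ) := by
    rw [hΔ0, Matrix.mul_sub, Matrix.mul_smul, Matrix.mul_smul, trace_sub, trace_smul, trace_smul,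
      trace_mul_outer, trace_mul_outer, smul_eq_mul, smul_eq_mul]
  have hΔ0tr : Δ0.trace.re = p - q := by
    rw [hΔ0, trace_sub, trace_smul, trace_smul, trace_outer, trace_outer, hψ, hφ]
    simp
  have f2 : p * a - q * b = (T0 + (p - q)) / 2 := by
    have h := hopt
    rw [htr0, hΔ0tr] at h
    rw [Complex.sub_re, Complex.re_ofReal_mul, Complex.re_ofReal_mul] at h
    exact h
  -- (f3)
  have hMtr : M.trace.re = 2 := by
    rw [hM, trace_add, trace_outer, trace_outer, hψ, hφ]
    norm_num
  have hMPψ : ((M * Pψ).trace).re = a + b := by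
    rw [trace_mul_comm, hM, Matrix.mul_add, trace_add, trace_mul_outer, trace_mul_outer,
      Complex.add_re, ha, hb]
  have f3 : g = 1 - (a + b) := by
    have hMPφ : M * (Pφ - Pψ) = M - M * Pψ - M * Pψ := by
      rw [hPφ]
      noncomm_ring
    rw [hg, hMPφ, trace_sub, trace_sub, Complex.sub_re, Complex.sub_re, hMtr, hMPψ]
    ring
  -- pinch identity
  have hPOeq : P_O = 1 - P_E := eq_sub_of_add_eq' hsum
  have hEE : P_E * Δ0 * P_E = Δ0 * P_E := by
    rw [← hcomm, Matrix.mul_assoc, hPE.2]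
  have hpinch0 : P_E * Δ0 * P_E + P_O * Δ0 * P_O = Δ0 := by
    rw [hPOeq, show (1 - P_E) * Δ0 * (1 - P_E)
      = Δ0 - P_E * Δ0 - Δ0 * P_E + P_E * Δ0 * P_E from by noncomm_ring, hEE, hcomm]
    abel
  have hpinchε : P_E * Δε * P_E + P_O * Δε * P_O = Δ0 + (ε : ℂ) • MP := by
    have hexp : P_E * (Δ0 + (ε : ℂ) • M) * P_E + P_O * (Δ0 + (ε : ℂ) • M) * P_O
        = (P_E * Δ0 * P_E + P_O * Δ0 * P_O) + (ε : ℂ) • (P_E * M * P_E + P_O * M * P_O) := by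
      rw [Matrix.mul_add, Matrix.add_mul, Matrix.mul_add, Matrix.add_mul,
        Matrix.mul_smul, Matrix.smul_mul, Matrix.mul_smul, Matrix.smul_mul, smul_add]
      abel
    rw [hΔε, hexp, hpinch0, hMPdef]
  -- Hermitian facts
  have hΔ0h : Δ0.IsHermitian := by
    rw [hΔ0]
    exact (herm_real_smul (outer_herm ψ) p).sub (herm_real_smul (outer_herm φ) q)
  have hMh : M.IsHermitian := by
    rw [hM]; exact (outer_herm ψ).add (outer_herm φ)
  have hMPh : MP.IsHermitian := by
    rw [hMPdef]
    have h1 := Matrix.isHermitian_conjTranspose_mul_mul P_E hMh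
    have h2 := Matrix.isHermitian_conjTranspose_mul_mul P_O hMh
    rw [hPE.1.eq] at h1
    rw [hPO.1.eq] at h2
    exact h1.add h2
  -- trace norm bound
  have hNle : traceNorm (Δ0 + (ε : ℂ) • MP) ≤ T0 + |ε| * traceNorm MP := by
    calc traceNorm (Δ0 + (ε : ℂ) • MP)
        ≤ traceNorm Δ0 + traceNorm ((ε : ℂ) • MP) :=
          traceNorm_add_le_herm _ _ hΔ0h (herm_real_smul hMPh ε)
      _ = T0 + |ε| * traceNorm MP := by rw [traceNorm_real_smul, hT0]
  -- final assembly
  rw [hpinchε, f1]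
  have keyeq : ((p + ε) * (1 - a) + (q - ε) * b)
      - (1 - traceNorm (Δ0 + (ε : ℂ) • MP)) / 2
      = g * ε + (traceNorm (Δ0 + (ε : ℂ) • MP) - T0) / 2 := by
    linear_combination (-1 : ℝ) * f2 - ε * f3 + (1 / 2 : ℝ) * hq
  rw [keyeq]
  have hfin : (traceNorm (Δ0 + (ε : ℂ) • MP) - T0) / 2 ≤ k * |ε| := by
    rw [hk]
    nlinarith [hNle]
  linarith
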